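/- (Consistency error of the BDF-q derivative.) Let q ≥ 1 be an integer and δ_0, …, δ_q the BDF-q coefficients. There exists a constant C > 0 depending only on q such that for every real Hilbert space H, every τ > 0, every t ∈ ℝ, and every function u : ℝ → H that is (q+1)-times continuously differentiable on [t − qτ, t], one has ‖ (1/τ) ∑_{i=0}^q δ_i u(t − iτ) − u′(t) ‖_H ≤ C τ^{q − 1/2} ( ∫_{t − qτ}^{t} ‖u^{(q+1)}(s)‖_H² ds )^{1/2}. -/

import Mathlib

/-- The BDF-q coefficients `δ_0, …, δ_q`, defined by
`∑_{i=0}^q δ_i ζ^i = ∑_{l=1}^q (1/l)(1 − ζ)^l`. -/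
noncomputable def bdfCoeff (q i : ℕ) : ℝ :=
  (∑ l ∈ Finset.Icc 1 q, Polynomial.C ((l : ℝ)⁻¹) * (1 - Polynomial.X) ^ l).coeff i

section BdfAux
open Polynomial
noncomputable def D (p : ℝ[X]) : ℝ[X] := X * derivative p

theorem coeff_D (p : ℝ[X]) (i : ℕ) : (D p).coeff i = i * p.coeff i := by
  cases i with
  | zero => simp [D]
  | succ n => simp [D, coeff_X_mul, coeff_derivative]; ring

theorem natDegree_D_le (p : ℝ[X]) : (D p).natDegree ≤ p.natDegree := by
  rcases eq_or_ne (derivative p) 0 with h | h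
  · simp [D, h]
  · calc (D p).natDegree ≤ X.natDegree + (derivative p).natDegree := natDegree_mul_le
    _ ≤ 1 + (p.natDegree - 1) :=
        add_le_add (le_of_eq natDegree_X) (natDegree_derivative_le p)
    _ ≤ p.natDegree := by
        have : 1 ≤ p.natDegree := by
          by_contra hh
          push_neg at hh
          interval_cases h' : p.natDegree
          · rw [eq_C_of_natDegree_eq_zero h'] at h
            exact h derivative_C
        omega

theorem D_key (q : ℕ) :
    D (∑ l ∈ Finset.Icc 1 q, Polynomial.C ((l : ℝ)⁻¹) * (1 - Polynomial.X) ^ l)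
      = (1 - X) ^ q - 1 := by
  induction q with
  | zero => simp [D]
  | succ n ih =>
    rw [Finset.sum_Icc_succ_top (by omega)]
    simp only [D, derivative_add, mul_add] at *
    rw [ih]
    have hd : derivative ((1 - X : ℝ[X]) ^ (n+1)) = -(C ((n:ℝ)+1) * (1-X)^n) := by
      rw [derivative_pow]
      simp
    rw [derivative_C_mul, hd]
    have hne : ((n:ℝ)+1) ≠ 0 := by positivity
    have hC : (C ((((n:ℕ)+1:ℕ) : ℝ)⁻¹) : ℝ[X]) * -(C ((n:ℝ)+1) * (1-X)^n)
        = -(1-X)^n := by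
      push_cast
      rw [mul_neg, ← mul_assoc, ← C_mul, inv_mul_cancel₀ hne]
      simp
    push_cast at hC ⊢
    rw [hC]
    ring

theorem coeff_D_iter (p : ℝ[X]) (k i : ℕ) :
    (D^[k] p).coeff i = (i:ℝ)^k * p.coeff i := by
  induction k with
  | zero => simp
  | succ n ih =>
    rw [Function.iterate_succ_apply', coeff_D, ih]
    ring

theorem D_step (m : ℕ) (hm : 1 ≤ m) (r : ℝ[X]) :
    ∃ r', D ((1 - X) ^ m * r) = (1 - X) ^ (m - 1) * r' := by
  obtain ⟨n, rfl⟩ : ∃ n, m = n + 1 := ⟨m - 1, by omega⟩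
  refine ⟨X * (-(C ((n:ℝ)+1)) * r + (1 - X) * derivative r), ?_⟩
  simp only [D, derivative_mul, derivative_pow]
  simp only [Nat.add_sub_cancel]
  have : derivative (1 - X : ℝ[X]) = -1 := by simp
  rw [this]
  push_cast
  ring

theorem D_iter_step (j : ℕ) : ∀ (m : ℕ) (r : ℝ[X]), j ≤ m →
    ∃ r', D^[j] ((1 - X) ^ m * r) = (1 - X) ^ (m - j) * r' := by
  induction j with
  | zero => intro m r _; exact ⟨r, by simp⟩
  | succ n ih =>
    intro m r hm
    obtain ⟨r1, hr1⟩ := D_step m (by omega) r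
    obtain ⟨r2, hr2⟩ := ih (m - 1) r1 (by omega)
    refine ⟨r2, ?_⟩
    rw [Function.iterate_succ_apply, hr1, hr2]
    congr 2
    omega

theorem bdf_moment (q k : ℕ) (hq : 1 ≤ q) (hk : k ≤ q) :
    ∑ i ∈ Finset.range (q+1), bdfCoeff q i * (i:ℝ)^k
      = if k = 1 then -1 else 0 := by
  set p : ℝ[X] := ∑ l ∈ Finset.Icc 1 q, Polynomial.C ((l : ℝ)⁻¹) * (1 - Polynomial.X) ^ l with hp
  have hdeg : p.natDegree ≤ q := by
    refine Polynomial.natDegree_sum_le_of_forall_le _ _ fun l hl => ?_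
    refine (natDegree_C_mul_le _ _).trans ?_
    refine (natDegree_pow_le).trans ?_
    have h1 : (1 - X : ℝ[X]).natDegree ≤ 1 := by
      refine (natDegree_sub_le _ _).trans ?_
      simp
    have := (Finset.mem_Icc.mp hl).2
    calc l * (1 - X : ℝ[X]).natDegree ≤ l * 1 := Nat.mul_le_mul_left _ h1
      _ ≤ q := by omega
  have hdegk : ∀ k, (D^[k] p).natDegree ≤ q := by
    intro k
    induction k with
    | zero => simpa using hdeg
    | succ n ih => rw [Function.iterate_succ_apply']; exact (natDegree_D_le _).trans ih
  have hsum : ∑ i ∈ Finset.range (q+1), bdfCoeff q i * (i:ℝ)^k = (D^[k] p).eval 1 := by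
    rw [Polynomial.eval_eq_sum_range' (lt_of_le_of_lt (hdegk k) (Nat.lt_succ_self q))]
    refine Finset.sum_congr rfl fun i _ => ?_
    rw [coeff_D_iter]
    simp [bdfCoeff, hp]
    ring
  rw [hsum]
  rcases Nat.lt_or_ge k 2 with hk2 | hk2
  · interval_cases k
    · simp only [Function.iterate_zero, id, if_neg (by omega : (0:ℕ) ≠ 1)]
      rw [hp]
      rw [eval_finset_sum]
      refine Finset.sum_eq_zero fun l hl => ?_
      have hl1 := (Finset.mem_Icc.mp hl).1
      simp [zero_pow (by omega : l ≠ 0)]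
    · simp only [if_pos rfl]
      rw [Function.iterate_one, D_key]
      simp [zero_pow (by omega : q ≠ 0)]
  · rw [if_neg (by omega)]
    obtain ⟨j, rfl⟩ : ∃ j, k = j + 2 := ⟨k - 2, by omega⟩
    have h1 : D^[j+2] p = D^[j] (D (D p)) := by
      rw [Function.iterate_succ_apply, Function.iterate_succ_apply]
    have h2 : D (D p) = D ((1-X)^q * 1) := by
      rw [D_key]
      simp only [D]
      rw [derivative_sub]
      simp
    obtain ⟨r1, hr1⟩ := D_step q hq (1 : ℝ[X])
    obtain ⟨r2, hr2⟩ := D_iter_step j (q-1) r1 (by omega)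
    rw [h1, h2, hr1, hr2, eval_mul, eval_pow]
    simp [zero_pow (show q - 1 - j ≠ 0 by omega)]

end BdfAux

open Set MeasureTheory intervalIntegral Nat

theorem taylor_remainder_integral {E : Type*} [NormedAddCommGroup E] [NormedSpace ℝ E]
    [CompleteSpace E] {u : ℝ → E} {a b : ℝ} (hab : a < b) {n : ℕ}
    (hu : ContDiffOn ℝ (n+1 : ℕ) u (Set.Icc a b)) {x : ℝ} (hx : x ∈ Set.Icc a b) :
    u x - taylorWithinEval u n (Set.Icc a b) b x
      = - ∫ s in x..b,
          (((n ! : ℝ)⁻¹ * (x - s) ^ n) • iteratedDerivWithin (n+1) u (Set.Icc a b) s) := by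
  have hunique := uniqueDiffOn_Icc hab
  have hn : (n : WithTop ℕ∞) ≤ ((n+1 : ℕ) : WithTop ℕ∞) := by exact_mod_cast Nat.le_succ n
  have hv : ContinuousOn (iteratedDerivWithin (n+1) u (Set.Icc a b)) (Set.Icc a b) :=
    hu.continuousOn_iteratedDerivWithin le_rfl hunique
  have hdiff : DifferentiableOn ℝ (iteratedDerivWithin n u (Set.Icc a b)) (Set.Ioo a b) :=
    (hu.differentiableOn_iteratedDerivWithin (by exact_mod_cast Nat.lt_succ_self n)
      hunique).mono Set.Ioo_subset_Icc_self
  have hint : IntervalIntegrable (fun s => ((n ! : ℝ)⁻¹ * (x - s) ^ n) •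
      iteratedDerivWithin (n+1) u (Set.Icc a b) s) volume x b := by
    apply ContinuousOn.intervalIntegrable
    have hsub : Set.uIcc x b ⊆ Set.Icc a b := by
      rw [Set.uIcc_of_le hx.2]; exact Set.Icc_subset_Icc hx.1 le_rfl
    exact (continuousOn_const.mul ((continuousOn_const.sub continuousOn_id).pow n)).smul
      (hv.mono hsub)
  have key := intervalIntegral.integral_eq_sub_of_hasDeriv_right_of_le (f := fun s =>
      taylorWithinEval u n (Set.Icc a b) s x)
    (f' := fun s => ((n ! : ℝ)⁻¹ * (x - s) ^ n) • iteratedDerivWithin (n+1) u (Set.Icc a b) s)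
    hx.2
    ((continuousOn_taylorWithinEval hunique (hu.of_le hn)).mono
      (Set.Icc_subset_Icc hx.1 le_rfl))
    (fun s hs => (taylorWithinEval_hasDerivAt_Ioo x hab ⟨lt_of_le_of_lt hx.1 hs.1, hs.2⟩
      (hu.of_le hn) hdiff).hasDerivWithinAt)
    hint
  rw [key]
  simp only [taylorWithinEval_self]
  abel

theorem taylor_remainder_norm_le {E : Type*} [NormedAddCommGroup E] [NormedSpace ℝ E]
    [CompleteSpace E] {u : ℝ → E} {a b : ℝ} (hab : a < b) {n : ℕ}
    (hu : ContDiffOn ℝ (n+1 : ℕ) u (Set.Icc a b)) {x : ℝ} (hx : x ∈ Set.Icc a b) :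
    ‖u x - taylorWithinEval u n (Set.Icc a b) b x‖
      ≤ ((b - a) ^ n / n !) * ∫ s in a..b, ‖iteratedDerivWithin (n+1) u (Set.Icc a b) s‖ := by
  have hunique := uniqueDiffOn_Icc hab
  set v := iteratedDerivWithin (n+1) u (Set.Icc a b) with hvdef
  have hv : ContinuousOn v (Set.Icc a b) := hu.continuousOn_iteratedDerivWithin le_rfl hunique
  have hvint : IntervalIntegrable (fun s => ‖v s‖) volume a b :=
    (hv.norm.mono (by rw [Set.uIcc_of_le hab.le])).intervalIntegrable
  have hwint : IntervalIntegrable (fun s => ‖((n ! : ℝ)⁻¹ * (x - s) ^ n) • v s‖) volume x b := by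
    apply ContinuousOn.intervalIntegrable
    have hsub : Set.uIcc x b ⊆ Set.Icc a b := by
      rw [Set.uIcc_of_le hx.2]; exact Set.Icc_subset_Icc hx.1 le_rfl
    exact (((continuousOn_const.mul ((continuousOn_const.sub continuousOn_id).pow n)).smul
      (hv.mono hsub)).norm)
  have hcint : IntervalIntegrable (fun s => ((b-a)^n / n !) * ‖v s‖) volume x b := by
    apply IntervalIntegrable.const_mul
    exact hvint.mono_set (by rw [Set.uIcc_of_le hx.2, Set.uIcc_of_le hab.le]
                             exact Set.Icc_subset_Icc hx.1 le_rfl)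
  rw [taylor_remainder_integral hab hu hx, norm_neg]
  calc ‖∫ s in x..b, ((n ! : ℝ)⁻¹ * (x - s) ^ n) • v s‖
      ≤ ∫ s in x..b, ‖((n ! : ℝ)⁻¹ * (x - s) ^ n) • v s‖ :=
        intervalIntegral.norm_integral_le_integral_norm hx.2
    _ ≤ ∫ s in x..b, ((b-a)^n / n !) * ‖v s‖ := by
        apply intervalIntegral.integral_mono_on hx.2 hwint hcint
        intro s hs
        rw [norm_smul]
        apply mul_le_mul_of_nonneg_right _ (norm_nonneg _)
        rw [Real.norm_eq_abs, abs_mul, abs_pow, abs_of_nonneg (by positivity : (0:ℝ) ≤ (n ! : ℝ)⁻¹)]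
        rw [div_eq_mul_inv, mul_comm ((b-a)^n)]
        apply mul_le_mul_of_nonneg_left _ (by positivity)
        apply pow_le_pow_left₀ (abs_nonneg _)
        rw [abs_sub_comm, abs_of_nonneg (by linarith [hx.1, hs.1] : (0:ℝ) ≤ s - x)]
        have := hs.2; have := hx.1; linarith
    _ ≤ ∫ s in a..b, ((b-a)^n / n !) * ‖v s‖ := by
        apply intervalIntegral.integral_mono_interval hx.1 hx.2 le_rfl
        · filter_upwards with s
          exact mul_nonneg (div_nonneg (pow_nonneg (by linarith) _) (by positivity))
            (norm_nonneg _)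
        · exact (hvint.const_mul _)
    _ = ((b - a) ^ n / n !) * ∫ s in a..b, ‖v s‖ := intervalIntegral.integral_const_mul _ _

theorem integral_norm_le_sqrt_integral_sq {a b : ℝ} (hab : a ≤ b) {f : ℝ → ℝ}
    (hf : ContinuousOn f (Set.Icc a b)) (hf0 : ∀ s ∈ Set.Icc a b, 0 ≤ f s) :
    ∫ s in a..b, f s ≤ Real.sqrt (b - a) * Real.sqrt (∫ s in a..b, (f s)^2) := by
  set μ := volume.restrict (Set.Ioc a b) with hμ
  have hfin : IsFiniteMeasure μ := by
    constructor
    rw [hμ, Measure.restrict_apply_univ, Real.volume_Ioc]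
    exact ENNReal.ofReal_lt_top
  obtain ⟨M, hM⟩ : ∃ M, ∀ s ∈ Set.Icc a b, ‖f s‖ ≤ M :=
    (isCompact_Icc).exists_bound_of_continuousOn hf
  have hmeas : AEStronglyMeasurable f μ :=
    (hf.mono Set.Ioc_subset_Icc_self).aestronglyMeasurable measurableSet_Ioc
  have hmem : MemLp f (ENNReal.ofReal 2) μ := by
    apply MemLp.of_bound hmeas M
    rw [hμ]
    rw [ae_restrict_iff' measurableSet_Ioc]
    filter_upwards with s hs
    exact hM s (Set.Ioc_subset_Icc_self hs)
  have hone : MemLp (fun _ : ℝ => (1:ℝ)) (ENNReal.ofReal 2) μ := memLp_const 1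
  have hconj : Real.HolderConjugate 2 2 := Real.HolderConjugate.two_two
  have key := MeasureTheory.integral_mul_le_Lp_mul_Lq_of_nonneg hconj
    (f := f) (g := fun _ => (1:ℝ)) (μ := μ)
    (((ae_restrict_iff' measurableSet_Ioc).mpr (Filter.Eventually.of_forall
        fun s hs => hf0 s (Set.Ioc_subset_Icc_self hs)) : ∀ᵐ x ∂μ, 0 ≤ f x))
    (Filter.Eventually.of_forall fun _ => zero_le_one) hmem hone
  simp only [mul_one, Real.one_rpow] at key
  have h1 : ∫ s in a..b, f s = ∫ s, f s ∂μ := by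
    rw [intervalIntegral.integral_of_le hab, hμ]
  have h2 : ∫ s in a..b, (f s)^2 = ∫ s, (f s)^(2:ℝ) ∂μ := by
    rw [intervalIntegral.integral_of_le hab, hμ]
    refine setIntegral_congr_fun measurableSet_Ioc fun s _ => ?_
    rw [← Real.rpow_natCast (f s) 2]
    norm_num
  have h3 : ∫ _, (1:ℝ) ∂μ = b - a := by
    rw [MeasureTheory.integral_const, smul_eq_mul, mul_one, hμ, measureReal_def, Measure.restrict_apply_univ, Real.volume_Ioc,
      ENNReal.toReal_ofReal (by linarith)]
  rw [h1, h2]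
  calc ∫ s, f s ∂μ ≤ (∫ s, f s ^ (2:ℝ) ∂μ) ^ (1/(2:ℝ)) * (∫ _, (1:ℝ) ∂μ) ^ (1/(2:ℝ)) := key
    _ = Real.sqrt (b - a) * Real.sqrt (∫ s, (f s)^(2:ℝ) ∂μ) := by
        rw [h3, mul_comm, Real.sqrt_eq_rpow, Real.sqrt_eq_rpow]

/-- Consistency error of the BDF-q derivative. For every `q ≥ 1` there is a
constant `C > 0` depending only on `q` such that for every real Hilbert space `H`, every
`τ > 0`, `t ∈ ℝ` and every function `u : ℝ → H` that is `(q+1)`-times continuously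
differentiable on `[t − qτ, t]`:
`‖(1/τ) ∑_{i=0}^q δ_i u(t − iτ) − u′(t)‖_H
  ≤ C τ^{q − 1/2} (∫_{t−qτ}^t ‖u^{(q+1)}(s)‖_H² ds)^{1/2}`. -/
theorem bdf_consistency_error (q : ℕ) (hq : 1 ≤ q) :
    ∃ C : ℝ, 0 < C ∧
      ∀ (H : Type*) [NormedAddCommGroup H] [InnerProductSpace ℝ H] [CompleteSpace H]
        (τ : ℝ), 0 < τ → ∀ (t : ℝ) (u : ℝ → H),
        ContDiffOn ℝ (q + 1 : ℕ) u (Set.Icc (t - (q : ℝ) * τ) t) →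
        ‖τ⁻¹ • (∑ i ∈ Finset.range (q + 1), bdfCoeff q i • u (t - (i : ℝ) * τ))
            - derivWithin u (Set.Icc (t - (q : ℝ) * τ) t) t‖
          ≤ C * τ ^ ((q : ℝ) - 1 / 2) *
            Real.sqrt (∫ s in (t - (q : ℝ) * τ)..t,
              ‖iteratedDerivWithin (q + 1) u (Set.Icc (t - (q : ℝ) * τ) t) s‖ ^ 2) := by
  classical
  set K : ℝ := (∑ i ∈ Finset.range (q+1), |bdfCoeff q i|) * (q:ℝ)^q * Real.sqrt q / (Nat.factorial q)
  have hK : 0 ≤ K := by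
    apply div_nonneg _ (by positivity)
    apply mul_nonneg (mul_nonneg (Finset.sum_nonneg fun i _ => abs_nonneg _) (by positivity))
      (Real.sqrt_nonneg _)
  refine ⟨K + 1, by linarith, ?_⟩
  intro H _ _ _ τ hτ t u hu
  set a : ℝ := t - (q:ℝ) * τ with hadef
  have hqτ : 0 < (q:ℝ) * τ := by
    have : (1:ℝ) ≤ q := by exact_mod_cast hq
    nlinarith
  have ha : a < t := by rw [hadef]; linarith
  set I : Set ℝ := Set.Icc a t with hI
  have hunique := uniqueDiffOn_Icc ha
  set v : ℝ → H := iteratedDerivWithin (q+1) u I with hv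
  have hvc : ContinuousOn v I := hu.continuousOn_iteratedDerivWithin le_rfl hunique
  set d : ℕ → H := fun k => iteratedDerivWithin k u I t with hd
  set P : ℝ → H := fun x => taylorWithinEval u q I t x with hP
  have htI : t ∈ I := ⟨ha.le, le_rfl⟩
  have hxmem : ∀ i ∈ Finset.range (q+1), t - (i:ℝ)*τ ∈ I := by
    intro i hi
    have hiq : (i:ℝ) ≤ q := by
      exact_mod_cast Nat.lt_succ_iff.mp (Finset.mem_range.mp hi)
    constructor
    · rw [hadef]
      have : (i:ℝ) * τ ≤ (q:ℝ) * τ := by nlinarith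
      linarith
    · have : 0 ≤ (i:ℝ) * τ := by positivity
      linarith
  -- Step B : exactness on the Taylor polynomial
  have hmom : ∀ k ∈ Finset.range (q+1),
      (∑ i ∈ Finset.range (q+1), bdfCoeff q i * ((t - (i:ℝ)*τ - t)^k / (Nat.factorial k)))
        = if k = 1 then τ else 0 := by
    intro k hk
    have hkq : k ≤ q := Nat.lt_succ_iff.mp (Finset.mem_range.mp hk)
    have h1 : ∀ i : ℕ, bdfCoeff q i * ((t - (i:ℝ)*τ - t)^k / (Nat.factorial k))
        = ((-τ)^k / (Nat.factorial k)) * (bdfCoeff q i * (i:ℝ)^k) := by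
      intro i
      have : (t - (i:ℝ)*τ - t) = (-τ) * i := by ring
      rw [this, mul_pow]
      ring
    rw [Finset.sum_congr rfl fun i _ => h1 i, ← Finset.mul_sum, bdf_moment q k hq hkq]
    by_cases hk1 : k = 1
    · subst hk1; simp
    · simp [hk1]
  have hB : ∑ i ∈ Finset.range (q+1), bdfCoeff q i • P (t - (i:ℝ)*τ) = τ • d 1 := by
    have h1 : ∀ i : ℕ, bdfCoeff q i • P (t - (i:ℝ)*τ)
        = ∑ k ∈ Finset.range (q+1),
            (bdfCoeff q i * ((t - (i:ℝ)*τ - t)^k / (Nat.factorial k))) • d k := by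
      intro i
      rw [hP]
      simp only [taylor_within_apply]
      rw [Finset.smul_sum]
      refine Finset.sum_congr rfl fun k _ => ?_
      rw [smul_smul, hd]
      congr 1
      ring
    rw [Finset.sum_congr rfl fun i _ => h1 i, Finset.sum_comm]
    have h2 : ∀ k ∈ Finset.range (q+1),
        (∑ i ∈ Finset.range (q+1),
          (bdfCoeff q i * ((t - (i:ℝ)*τ - t)^k / (Nat.factorial k))) • d k)
        = (if k = 1 then τ else 0) • d k := by
      intro k hk
      rw [← Finset.sum_smul, hmom k hk]
    rw [Finset.sum_congr rfl h2]
    have h3 : ∀ k ∈ Finset.range (q+1), (if k = 1 then τ else 0) • d k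
        = if k = 1 then τ • d k else 0 := by
      intro k _
      by_cases hk1 : k = 1 <;> simp [hk1]
    rw [Finset.sum_congr rfl h3, Finset.sum_ite_eq' (Finset.range (q+1)) 1 (fun k => τ • d k)]
    rw [if_pos (Finset.mem_range.mpr (by omega))]
  have hd1 : derivWithin u I t = d 1 := by
    rw [hd]
    exact (iteratedDerivWithin_one (f := u) (s := I) ▸ rfl)
  -- rearrangement
  have hsplit : τ⁻¹ • (∑ i ∈ Finset.range (q + 1), bdfCoeff q i • u (t - (i : ℝ) * τ))
      - derivWithin u I t
      = τ⁻¹ • (∑ i ∈ Finset.range (q+1),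
          bdfCoeff q i • (u (t - (i:ℝ)*τ) - P (t - (i:ℝ)*τ))) := by
    rw [hd1]
    have : d 1 = τ⁻¹ • (τ • d 1) := by
      rw [smul_smul, inv_mul_cancel₀ hτ.ne', one_smul]
    rw [this, ← hB, ← smul_sub, ← Finset.sum_sub_distrib]
    congr 1
    exact Finset.sum_congr rfl fun i _ => (smul_sub _ _ _).symm
  rw [hsplit]
  -- bound each remainder
  set J : ℝ := ∫ s in a..t, ‖v s‖ with hJ
  have hrem : ∀ i ∈ Finset.range (q+1),
      ‖u (t - (i:ℝ)*τ) - P (t - (i:ℝ)*τ)‖ ≤ ((t - a)^q / (Nat.factorial q)) * J := by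
    intro i hi
    exact taylor_remainder_norm_le ha hu (hxmem i hi)
  have hJ0 : 0 ≤ J := by
    rw [hJ]
    apply intervalIntegral.integral_nonneg ha.le
    intro s _; exact norm_nonneg _
  have hnorm1 : ‖τ⁻¹ • (∑ i ∈ Finset.range (q+1),
        bdfCoeff q i • (u (t - (i:ℝ)*τ) - P (t - (i:ℝ)*τ)))‖
      ≤ τ⁻¹ * ((∑ i ∈ Finset.range (q+1), |bdfCoeff q i|) * (((t - a)^q / (Nat.factorial q)) * J)) := by
    rw [norm_smul, Real.norm_eq_abs, abs_of_pos (by positivity : (0:ℝ) < τ⁻¹)]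
    apply mul_le_mul_of_nonneg_left _ (by positivity)
    calc ‖∑ i ∈ Finset.range (q+1), bdfCoeff q i • (u (t - (i:ℝ)*τ) - P (t - (i:ℝ)*τ))‖
        ≤ ∑ i ∈ Finset.range (q+1), ‖bdfCoeff q i • (u (t - (i:ℝ)*τ) - P (t - (i:ℝ)*τ))‖ :=
          norm_sum_le _ _
      _ ≤ ∑ i ∈ Finset.range (q+1), |bdfCoeff q i| * (((t - a)^q / (Nat.factorial q)) * J) := by
          apply Finset.sum_le_sum
          intro i hi
          rw [norm_smul, Real.norm_eq_abs]
          exact mul_le_mul_of_nonneg_left (hrem i hi) (abs_nonneg _)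
      _ = (∑ i ∈ Finset.range (q+1), |bdfCoeff q i|) * (((t - a)^q / (Nat.factorial q)) * J) := by
          rw [← Finset.sum_mul]
  -- Cauchy-Schwarz
  have hCS : J ≤ Real.sqrt (t - a) * Real.sqrt (∫ s in a..t, ‖v s‖^2) := by
    rw [hJ]
    exact integral_norm_le_sqrt_integral_sq ha.le hvc.norm (fun s _ => norm_nonneg _)
  have hta : t - a = (q:ℝ) * τ := by rw [hadef]; ring
  -- put everything together
  set S : ℝ := Real.sqrt (∫ s in a..t, ‖v s‖^2) with hS
  have hS0 : 0 ≤ S := Real.sqrt_nonneg _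
  have hchain : τ⁻¹ * ((∑ i ∈ Finset.range (q+1), |bdfCoeff q i|) * (((t - a)^q / (Nat.factorial q)) * J))
      ≤ K * (τ ^ ((q:ℝ) - 1/2)) * S := by
    have h1 : J ≤ Real.sqrt ((q:ℝ)*τ) * S := by rw [← hta]; exact hCS
    have h2 : τ⁻¹ * ((∑ i ∈ Finset.range (q+1), |bdfCoeff q i|) * (((t - a)^q / (Nat.factorial q)) * J))
        ≤ τ⁻¹ * ((∑ i ∈ Finset.range (q+1), |bdfCoeff q i|)
            * ((((q:ℝ)*τ)^q / (Nat.factorial q)) * (Real.sqrt ((q:ℝ)*τ) * S))) := by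
      apply mul_le_mul_of_nonneg_left _ (by positivity)
      apply mul_le_mul_of_nonneg_left _ (Finset.sum_nonneg fun i _ => abs_nonneg _)
      rw [hta]
      apply mul_le_mul_of_nonneg_left h1 (by positivity)
    refine h2.trans (le_of_eq ?_)
    have hsq : Real.sqrt ((q:ℝ)*τ) = Real.sqrt q * Real.sqrt τ :=
      Real.sqrt_mul (by positivity) _
    have hpow : ((q:ℝ)*τ)^q = (q:ℝ)^q * τ^q := mul_pow _ _ _
    have hrpow : τ⁻¹ * (τ^q * Real.sqrt τ) = τ ^ ((q:ℝ) - 1/2) := by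
      rw [Real.sqrt_eq_rpow, ← Real.rpow_natCast τ q, ← Real.rpow_neg_one τ,
        ← Real.rpow_add hτ, ← Real.rpow_add hτ]
      congr 1
      ring
    rw [hsq, hpow, ← hrpow, hS]
    ring
  calc ‖τ⁻¹ • (∑ i ∈ Finset.range (q+1),
        bdfCoeff q i • (u (t - (i:ℝ)*τ) - P (t - (i:ℝ)*τ)))‖
      ≤ τ⁻¹ * ((∑ i ∈ Finset.range (q+1), |bdfCoeff q i|) * (((t - a)^q / (Nat.factorial q)) * J)) := hnorm1
    _ ≤ K * (τ ^ ((q:ℝ) - 1/2)) * S := hchain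
    _ ≤ (K + 1) * (τ ^ ((q:ℝ) - 1/2)) * S := by
        apply mul_le_mul_of_nonneg_right _ hS0
        apply mul_le_mul_of_nonneg_right (by linarith) (Real.rpow_nonneg hτ.le _)
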